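/- If {x_α : α < λ} is a (κ,λ)-shattering family, then setting S_α = {x_β : β < λ} for each α < κ gives a sequence ⟨S_α : α < κ⟩ of splitting families such that no one-to-one selection ⟨s_α : α < κ⟩ with s_α ∈ S_α has an infinite pseudo-intersection. -/

import Mathlib

open Set Cardinal

/-- A `(κ,λ)`-shattering family `{x α : α < λ}` yields, with `S_α = {x β : β < λ}` for
`α < κ`, a sequence of splitting families such that no one-to-one selection has an
infinite pseudo-intersection.  Here the cardinal `κ` is represented by the index type `J`. -/
theorem stmt6 {ι : Type u} {J : Type u}
    (hJω : ℵ₀ ≤ Cardinal.mk J) (hκ : Cardinal.mk J < Cardinal.mk ι)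
    (x : ι → Set ℕ) (hinf : ∀ α, (x α).Infinite)
    (h1 : ∀ b : Set ℕ, b.Infinite → Cardinal.mk {α : ι | (b \ x α).Finite} < Cardinal.mk J)
    (h2 : ∀ b : Set ℕ, b.Infinite → Cardinal.mk {α : ι | (b ∩ x α).Finite} < Cardinal.mk ι) :
    (∀ b : Set ℕ, b.Infinite → ∃ β : ι, (b ∩ x β).Infinite ∧ (b \ x β).Infinite) ∧
    ∀ s : J → Set ℕ, (∀ j, ∃ β : ι, s j = x β) → Function.Injective s →
      ¬ ∃ b : Set ℕ, b.Infinite ∧ ∀ j, (b \ s j).Finite := by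
  have hιω : ℵ₀ ≤ Cardinal.mk ι := le_of_lt (lt_of_le_of_lt hJω hκ)
  constructor
  · intro b hb
    set A : Set ι := {α : ι | (b \ x α).Finite} with hA
    set B : Set ι := {α : ι | (b ∩ x α).Finite} with hB
    have hAB : Cardinal.mk ↥(A ∪ B) < Cardinal.mk ι := by
      calc Cardinal.mk ↥(A ∪ B) ≤ Cardinal.mk ↥A + Cardinal.mk ↥B := mk_union_le A B
        _ < Cardinal.mk ι := by
          have h1' := lt_of_lt_of_le (h1 b hb) (le_of_lt hκ)
          have h2' := h2 b hb
          have := Cardinal.add_lt_of_lt hιω h1' h2'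
          exact this
    have hne : A ∪ B ≠ Set.univ := by
      intro h
      rw [h, Cardinal.mk_univ] at hAB
      exact lt_irrefl _ hAB
    obtain ⟨β, hβ⟩ : ∃ β, β ∉ A ∪ B := by
      by_contra h
      push_neg at h
      exact hne (eq_univ_of_forall h)
    simp only [mem_union, hA, hB, mem_setOf_eq, not_or] at hβ
    exact ⟨β, hβ.2, hβ.1⟩
  · intro s hs hinj ⟨b, hb, hps⟩
    choose f hf using hs
    have hfinj : Function.Injective f := by
      intro j j' h
      apply hinj
      rw [hf j, hf j', h]
    have : Cardinal.mk J ≤ Cardinal.mk {α : ι | (b \ x α).Finite} := by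
      apply Cardinal.mk_le_of_injective (f := fun j => (⟨f j, by
        simpa [← hf j] using hps j⟩ : {α : ι | (b \ x α).Finite}))
      intro j j' h
      exact hfinj (congrArg Subtype.val h)
    exact absurd (lt_of_le_of_lt this (h1 b hb)) (lt_irrefl _)
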